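/- For any rational numbers a > 0 and b, the affine map f : B → B, f(x,y) = (a·x + b, a·y), is a homeomorphism of the Bing space B. -/

import Mathlib

/-- A point of the Bing space: a rational pair `(x, y)` with `0 ≤ y`. -/
structure BingPt where
  x : ℚ
  y : ℚ
  hy : 0 ≤ y

/-- The pair of base "intervals" attached to the point `(a,b)`:
rational points `(x,0)` with `|x - (a - b/√3)| < ε` or `|x - (a + b/√3)| < ε`. -/
def wedge (a b : ℚ) (ε : ℝ) : Set BingPt :=
  {z : BingPt | z.y = 0 ∧ (|(z.x : ℝ) - ((a : ℝ) - (b : ℝ) / Real.sqrt 3)| < ε ∨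
    |(z.x : ℝ) - ((a : ℝ) + (b : ℝ) / Real.sqrt 3)| < ε)}

/-- A set `U` is Bing-open if each of its points `(a,b)` admits `ε > 0`
with the corresponding base intervals contained in `U`. -/
def BingOpen (U : Set BingPt) : Prop :=
  ∀ z ∈ U, ∃ ε : ℝ, 0 < ε ∧ wedge z.x z.y ε ⊆ U

/-- The Bing topology. -/
instance : TopologicalSpace BingPt where
  IsOpen := BingOpen
  isOpen_univ := fun _ _ => ⟨1, one_pos, fun _ _ => trivial⟩
  isOpen_inter := by
    intro U V hU hV z hz
    obtain ⟨ε1, hε1, h1⟩ := hU z hz.1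
    obtain ⟨ε2, hε2, h2⟩ := hV z hz.2
    refine ⟨min ε1 ε2, lt_min hε1 hε2, fun w hw => ⟨h1 ⟨hw.1, ?_⟩, h2 ⟨hw.1, ?_⟩⟩⟩
    · exact hw.2.imp (fun h => h.trans_le (min_le_left _ _)) (fun h => h.trans_le (min_le_left _ _))
    · exact hw.2.imp (fun h => h.trans_le (min_le_right _ _)) (fun h => h.trans_le (min_le_right _ _))
  isOpen_sUnion := by
    intro S hS z hz
    obtain ⟨U, hU, hzU⟩ := hz
    obtain ⟨ε, hε, h⟩ := hS U hU z hzU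
    exact ⟨ε, hε, fun w hw => ⟨U, hU, h hw⟩⟩

/-- The affine map on Bing points. -/
def bingAffine (a b : ℚ) (ha : 0 < a) : BingPt → BingPt :=
  fun z => ⟨a * z.x + b, a * z.y, mul_nonneg ha.le z.hy⟩

lemma bingAffine_continuous (a b : ℚ) (ha : 0 < a) :
    Continuous (bingAffine a b ha) := by
  rw [continuous_def]
  intro U hU z hz
  obtain ⟨ε, hε, hsub⟩ := hU _ hz
  have ha' : (0:ℝ) < (a:ℝ) := by exact_mod_cast ha
  refine ⟨ε / a, div_pos hε ha', fun w hw => ?_⟩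
  obtain ⟨hwy, hwx⟩ := hw
  refine hsub ⟨?_, ?_⟩
  · show (a * w.y : ℚ) = 0
    rw [hwy, mul_zero]
  · have key : ∀ s : ℝ,
        |(w.x : ℝ) - ((z.x : ℝ) + s * (z.y : ℝ) / Real.sqrt 3)| < ε / a →
        |((bingAffine a b ha w).x : ℝ) -
          (((bingAffine a b ha z).x : ℝ) + s * ((bingAffine a b ha z).y : ℝ) / Real.sqrt 3)| < ε := by
      intro s hs
      have h3 : Real.sqrt 3 ≠ 0 := by positivity
      have : ((bingAffine a b ha w).x : ℝ) -
          (((bingAffine a b ha z).x : ℝ) + s * ((bingAffine a b ha z).y : ℝ) / Real.sqrt 3)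
          = (a : ℝ) * ((w.x : ℝ) - ((z.x : ℝ) + s * (z.y : ℝ) / Real.sqrt 3)) := by
        simp only [bingAffine]
        push_cast
        field_simp
        ring
      rw [this, abs_mul, abs_of_pos ha']
      calc (a:ℝ) * |(w.x : ℝ) - ((z.x : ℝ) + s * (z.y : ℝ) / Real.sqrt 3)|
          < (a:ℝ) * (ε / a) := by exact (mul_lt_mul_iff_right₀ ha').mpr hs
        _ = ε := by field_simp
    rcases hwx with h | h
    · left
      have := key (-1) (by rw [show (z.x : ℝ) + (-1) * (z.y : ℝ) / Real.sqrt 3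
        = (z.x : ℝ) - (z.y : ℝ) / Real.sqrt 3 by ring]; exact h)
      rw [show (((bingAffine a b ha z).x : ℝ) + (-1) * ((bingAffine a b ha z).y : ℝ) / Real.sqrt 3)
        = (((bingAffine a b ha z).x : ℝ) - ((bingAffine a b ha z).y : ℝ) / Real.sqrt 3) by ring] at this
      exact this
    · right
      have := key 1 (by rw [show (z.x : ℝ) + 1 * (z.y : ℝ) / Real.sqrt 3
        = (z.x : ℝ) + (z.y : ℝ) / Real.sqrt 3 by ring]; exact h)
      rw [one_mul] at this
      exact this

/-- For rationals `a > 0` and `b`, the affine map `(x,y) ↦ (a·x + b, a·y)` is a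
homeomorphism of the Bing space. -/
theorem bing_affine_homeo (a b : ℚ) (ha : 0 < a) :
    ∃ h : BingPt ≃ₜ BingPt, ∀ z : BingPt, (h z).x = a * z.x + b ∧ (h z).y = a * z.y := by
  have ha' : 0 < a⁻¹ := inv_pos.mpr ha
  refine ⟨⟨⟨bingAffine a b ha, bingAffine a⁻¹ (-b / a) ha', fun z => ?_, fun z => ?_⟩,
    bingAffine_continuous a b ha, bingAffine_continuous a⁻¹ (-b / a) ha'⟩,
    fun z => ⟨rfl, rfl⟩⟩
  · cases z with
    | mk x y hy =>
      simp only [bingAffine, BingPt.mk.injEq]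
      constructor <;> field_simp <;> ring
  · cases z with
    | mk x y hy =>
      simp only [bingAffine, BingPt.mk.injEq]
      constructor <;> field_simp <;> ring
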